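/- For every S ⊆ {1,…,n} with ∅ ≠ S ≠ {1,…,n} such that S is not equal to any nested set N_i (i = 1,…,n−1), not the complement of any N_i, not equal to any Q-set Q_j (j = 1,…,k−1), and not the complement of any Q_j, the cut δ(S) has capacity at least 5. -/
import Mathlib


open Finset

namespace CoverSmallCuts

/-- `nn k` is the number `n = 2 + k(k-1)/2` of nodes. -/
def nn (k : ℕ) : ℕ := 2 + k * (k - 1) / 2

/-- `mm k` is the number `m = k(k-1)/2 + k` of links. -/
def mm (k : ℕ) : ℕ := k * (k - 1) / 2 + k

/-- The nested set `N_i = {1, …, i}`. -/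
def Nset (i : ℕ) : Finset ℕ := Finset.Icc 1 i

/-- The Q-set `Q_j = {2+(j-1)k/2, …, 1+j·k/2}`. -/
def Qset (k j : ℕ) : Finset ℕ := Finset.Icc (2 + (j - 1) * (k / 2)) (1 + j * (k / 2))

/-- Capacity of the path edge `{i, i+1}` of the capacitated graph `G`. -/
def pathCap (k i : ℕ) : ℕ :=
  if i = 1 ∨ i = nn k - 1 then 2
  else if ∃ j ∈ Finset.Icc 1 (k - 1), i ∈ Qset k j ∧ i + 1 ∈ Qset k j then 3
  else 1

/-- Capacity of the cut `δ(S)` in the capacitated graph `G`: the sum of the capacities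
of the edges of `G` with exactly one endpoint in `S`. -/
def cutCap (k : ℕ) (S : Finset ℕ) : ℕ :=
  (∑ i ∈ Finset.Icc 1 (nn k - 1),
      if (i ∈ S) ↔ ((i + 1) ∈ S) then 0 else pathCap k i)
  + (∑ j ∈ Finset.Icc 1 (k - 1),
      if ((1 + (j - 1) * (k / 2)) ∈ S) ↔ ((2 + j * (k / 2)) ∈ S) then 0 else 1)

/-- A links system: the `s,t`-paths `P_1, …, P_{k-1}` are recorded by the function
`node`, where `node i t` is the `t`-th node of the path `P_i` (for `1 ≤ i ≤ k-1` and
`0 ≤ t ≤ k/2 + 1`); the class `P_k` consists of the single link `{1, n}`. -/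
structure LinksSystem (k : ℕ) where
  node : ℕ → ℕ → ℕ
  /-- each path `P_i` starts at `s = 1` -/
  node_first : ∀ i ∈ Finset.Icc 1 (k - 1), node i 0 = 1
  /-- each path `P_i` ends at `t = n` -/
  node_last : ∀ i ∈ Finset.Icc 1 (k - 1), node i (k / 2 + 1) = nn k
  /-- node indices strictly increase along each path -/
  node_mono : ∀ i ∈ Finset.Icc 1 (k - 1), ∀ t ≤ k / 2, node i t < node i (t + 1)
  /-- every node in `{2, …, n-1}` is an internal node of exactly one of `P_1, …, P_{k-1}` -/
  cover : ∀ v ∈ Finset.Icc 2 (nn k - 1),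
      ∃! i, i ∈ Finset.Icc 1 (k - 1) ∧ ∃ t ∈ Finset.Icc 1 (k / 2), node i t = v
  /-- `P_i` has an internal node in `Q_j` iff
  `(i ≤ j ≤ min(i+k/2-1, k-1))` or `(j < i and j ≤ i-k/2)` -/
  meetsQ : ∀ i ∈ Finset.Icc 1 (k - 1), ∀ j ∈ Finset.Icc 1 (k - 1),
      ((∃ t ∈ Finset.Icc 1 (k / 2), node i t ∈ Qset k j) ↔
        ((i ≤ j ∧ j ≤ min (i + k / 2 - 1) (k - 1)) ∨ (j < i ∧ j ≤ i - k / 2)))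

/-- The class `P_i` of links: the edge set of the path `P_i` for `i < k`,
and `{{1, n}}` for `i = k`. -/
def LinksSystem.P {k : ℕ} (LS : LinksSystem k) (i : ℕ) : Finset (Sym2 ℕ) :=
  if i = k then {s(1, nn k)}
  else (Finset.Icc 0 (k / 2)).image fun t => s(LS.node i t, LS.node i (t + 1))

/-- The set `L` of all links. -/
def LinksSystem.links {k : ℕ} (LS : LinksSystem k) : Finset (Sym2 ℕ) :=
  (Finset.Icc 1 k).biUnion LS.P

open scoped Classical in
/-- `deltaL F S` is `δ_F(S)`: the set of links of `F` with exactly one endpoint in `S`. -/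
noncomputable def deltaL (F : Finset (Sym2 ℕ)) (S : Finset ℕ) : Finset (Sym2 ℕ) :=
  F.filter fun e => ∃ a b, e = s(a, b) ∧ a ∈ S ∧ b ∉ S

/-- The 0-1 indicator vector `χ^F` of a set `F` of links. -/
noncomputable def chi (F : Finset (Sym2 ℕ)) : Sym2 ℕ → ℝ :=
  fun e => if e ∈ F then 1 else 0


private lemma prop_mem (S : Finset ℕ) (x : ℕ) : ∀ y, x ≤ y →
    (∀ i, x ≤ i → i < y → ((i ∈ S) ↔ (i + 1 ∈ S))) → ((x ∈ S) ↔ (y ∈ S)) := by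
  intro y
  induction y with
  | zero =>
    intro h _
    have hx : x = 0 := by omega
    subst hx
    exact Iff.rfl
  | succ y ih =>
    intro hxy h
    rcases Nat.lt_or_ge x (y+1) with hlt | hge
    · have h1 := ih (by omega) (fun i a b => h i a (by omega))
      have h2 := h y (by omega) (by omega)
      exact h1.trans h2
    · have hx : x = y + 1 := by omega
      rw [hx]

private lemma window_odd (k : ℕ) (S : Finset ℕ) (j a : ℕ)
    (hx : 1 + (j - 1) * (k / 2) ≤ a) (hy : a ≤ 1 + j * (k / 2))
    (hXa : ¬((a ∈ S) ↔ (a + 1 ∈ S)))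
    (hother : ∀ i, 1 + (j - 1) * (k / 2) ≤ i → i ≤ 1 + j * (k / 2) → i ≠ a →
      ((i ∈ S) ↔ (i + 1 ∈ S))) :
    ¬(((1 + (j - 1) * (k / 2)) ∈ S) ↔ ((2 + j * (k / 2)) ∈ S)) := by
  have h1 : ((1 + (j - 1) * (k / 2)) ∈ S) ↔ (a ∈ S) :=
    prop_mem S _ a hx (fun i hi1 hi2 => hother i hi1 (by omega) (by omega))
  have h2 : ((a + 1) ∈ S) ↔ ((1 + j * (k / 2) + 1) ∈ S) :=
    prop_mem S (a+1) _ (by omega) (fun i hi1 hi2 => hother i (by omega) (by omega) (by omega))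
  have e : 2 + j * (k / 2) = 1 + j * (k / 2) + 1 := by omega
  rw [e]
  tauto

private lemma nn_eq (k : ℕ) (hke : Even k) : nn k = 2 + (k - 1) * (k / 2) := by
  obtain ⟨h, rfl⟩ := hke
  have h2 : (h + h) / 2 = h := by omega
  have h3 : (h + h) * (h + h - 1) / 2 = h * (h + h - 1) := by
    rw [show (h+h) * (h+h-1) = 2 * (h * (h+h-1)) by ring]
    omega
  rw [nn, h3, h2, Nat.mul_comm]

private lemma mul_pred_step (H m : ℕ) (hm : 1 ≤ m) : (m - 1) * H + H = m * H := by
  have e : m = m - 1 + 1 := by omega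
  calc (m-1) * H + H = (m - 1 + 1) * H := by ring
  _ = m * H := by rw [← e]

private lemma pathCap_pos (k i : ℕ) : 1 ≤ pathCap k i := by
  unfold pathCap
  split
  · omega
  · split <;> omega

private lemma pathCap_one (k : ℕ) : pathCap k 1 = 2 := by
  unfold pathCap; rw [if_pos (Or.inl rfl)]

private lemma pathCap_last (k : ℕ) : pathCap k (nn k - 1) = 2 := by
  unfold pathCap; rw [if_pos (Or.inr rfl)]

private lemma pathCap_interior (k : ℕ) (hk : 4 ≤ k) (hke : Even k) (i r : ℕ)
    (hr1 : 1 ≤ r) (hr2 : r ≤ k - 1)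
    (h1 : 2 + (r - 1) * (k / 2) ≤ i) (h2 : i + 1 ≤ 1 + r * (k / 2)) :
    pathCap k i = 3 := by
  have hH : 2 ≤ k / 2 := by omega
  have hmono : r * (k / 2) ≤ (k - 1) * (k / 2) := Nat.mul_le_mul_right _ hr2
  have hnn := nn_eq k hke
  have hc2 : ∃ j ∈ Finset.Icc 1 (k - 1), i ∈ Qset k j ∧ i + 1 ∈ Qset k j := by
    refine ⟨r, Finset.mem_Icc.2 ⟨hr1, hr2⟩, ?_, ?_⟩ <;>
      (rw [Qset, Finset.mem_Icc]; omega)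
  have hc1 : ¬(i = 1 ∨ i = nn k - 1) := by omega
  unfold pathCap
  rw [if_neg hc1, if_pos hc2]

private lemma trich (k : ℕ) (hk : 4 ≤ k) (hke : Even k) (i : ℕ)
    (h1 : 1 ≤ i) (h2 : i ≤ nn k - 1) :
    i = 1 ∨ i = nn k - 1 ∨ (∃ p, 1 ≤ p ∧ p ≤ k - 2 ∧ i = 1 + p * (k / 2)) ∨
      (∃ r, 1 ≤ r ∧ r ≤ k - 1 ∧ 2 + (r - 1) * (k / 2) ≤ i ∧ i + 1 ≤ 1 + r * (k / 2)) := by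
  have hH : 2 ≤ k / 2 := by omega
  have hnn := nn_eq k hke
  by_cases e1 : i = 1
  · exact Or.inl e1
  by_cases e2 : i = nn k - 1
  · exact Or.inr (Or.inl e2)
  right; right
  obtain ⟨q, m, hm, hqm⟩ : ∃ q m, m < k/2 ∧ i - 2 = q * (k/2) + m :=
    ⟨(i-2)/(k/2), (i-2)%(k/2), Nat.mod_lt _ (by omega), by
      rw [Nat.mul_comm]
      exact (Nat.div_add_mod _ _).symm⟩
  have hqk : q + 1 ≤ k - 1 := by
    by_contra hc
    have hge : k - 1 ≤ q := by omega
    have hmono2 : (k-1) * (k/2) ≤ q * (k/2) := Nat.mul_le_mul_right _ hge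
    omega
  have hmono : (q+1) * (k/2) ≤ (k-1) * (k/2) := Nat.mul_le_mul_right _ hqk
  have hstep : (q + 1) * (k/2) = q * (k/2) + (k/2) := by ring
  by_cases e3 : i = 1 + (q+1) * (k/2)
  · left
    refine ⟨q+1, by omega, ?_, e3⟩
    by_contra hc
    have hq1 : q + 1 = k - 1 := by omega
    rw [hq1] at e3
    omega
  · right
    refine ⟨q+1, by omega, hqk, ?_, ?_⟩
    · have e4 : (q+1-1) * (k/2) = q * (k/2) := by rw [Nat.add_sub_cancel]
      omega
    · omega



private lemma single_is_N (k : ℕ) (hk : 4 ≤ k) (S : Finset ℕ)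
    (hsub : S ⊆ Finset.Icc 1 (nn k)) (a : ℕ) (ha1 : 1 ≤ a) (ha2 : a ≤ nn k - 1)
    (hXa : ¬((a ∈ S) ↔ (a + 1 ∈ S)))
    (honly : ∀ i, 1 ≤ i → i ≤ nn k - 1 → i ≠ a → ((i ∈ S) ↔ (i + 1 ∈ S))) :
    S = Nset a ∨ S = Finset.Icc 1 (nn k) \ Nset a := by
  have hn8 : 8 ≤ nn k := by
    have h12 : 4 * 3 ≤ k * (k - 1) := Nat.mul_le_mul hk (by omega)
    unfold nn; omega
  have hlow : ∀ x, 1 ≤ x → x ≤ a → ((x ∈ S) ↔ (a ∈ S)) := fun x hx1 hx2 =>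
    prop_mem S x a hx2 (fun i hi1 hi2 => honly i (by omega) (by omega) (by omega))
  have hhigh : ∀ x, a + 1 ≤ x → x ≤ nn k → ((a + 1 ∈ S) ↔ (x ∈ S)) := fun x hx1 hx2 =>
    prop_mem S (a+1) x hx1 (fun i hi1 hi2 => honly i (by omega) (by omega) (by omega))
  by_cases h1 : a ∈ S
  · left
    apply Finset.ext
    intro x
    rw [Nset, Finset.mem_Icc]
    constructor
    · intro hx
      have hx' := Finset.mem_Icc.1 (hsub hx)
      refine ⟨hx'.1, ?_⟩
      by_contra hc
      have hx1 : a + 1 ≤ x := by omega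
      have hS1 : a + 1 ∈ S := (hhigh x hx1 (by omega)).2 hx
      exact hXa (iff_of_true h1 hS1)
    · rintro ⟨hx1, hx2⟩
      exact (hlow x hx1 hx2).2 h1
  · right
    have ha1S : a + 1 ∈ S := by
      by_contra hc
      exact hXa (iff_of_false h1 hc)
    apply Finset.ext
    intro x
    rw [Finset.mem_sdiff, Nset, Finset.mem_Icc, Finset.mem_Icc]
    constructor
    · intro hx
      have hx' := Finset.mem_Icc.1 (hsub hx)
      refine ⟨hx', ?_⟩
      rintro ⟨hx1, hx2⟩
      exact h1 ((hlow x hx1 hx2).1 hx)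
    · rintro ⟨⟨hx1, hx2⟩, hnot⟩
      have hxa : a + 1 ≤ x := by omega
      exact (hhigh x hxa hx2).1 ha1S

private lemma pair_is_Q (k : ℕ) (hk : 4 ≤ k) (hke : Even k) (S : Finset ℕ)
    (hsub : S ⊆ Finset.Icc 1 (nn k)) (j : ℕ) (hj1 : 1 ≤ j) (hj2 : j ≤ k - 1)
    (hXa : ¬(((1 + (j - 1) * (k / 2)) ∈ S) ↔ ((1 + (j - 1) * (k / 2) + 1) ∈ S)))
    (hXb : ¬(((1 + j * (k / 2)) ∈ S) ↔ ((1 + j * (k / 2) + 1) ∈ S)))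
    (honly : ∀ i, 1 ≤ i → i ≤ nn k - 1 → i ≠ 1 + (j - 1) * (k / 2) →
      i ≠ 1 + j * (k / 2) → ((i ∈ S) ↔ (i + 1 ∈ S))) :
    S = Qset k j ∨ S = Finset.Icc 1 (nn k) \ Qset k j := by
  have hH : 2 ≤ k / 2 := by omega
  have hnn := nn_eq k hke
  have hmul : (j - 1) * (k / 2) + (k / 2) = j * (k / 2) := mul_pred_step _ j hj1
  have hmono : j * (k / 2) ≤ (k - 1) * (k / 2) := Nat.mul_le_mul_right _ hj2
  have hlow : ∀ x, 1 ≤ x → x ≤ 1 + (j-1)*(k/2) → ((x ∈ S) ↔ ((1 + (j-1)*(k/2)) ∈ S)) :=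
    fun x hx1 hx2 => prop_mem S x _ hx2
      (fun i hi1 hi2 => honly i (by omega) (by omega) (by omega) (by omega))
  have hmid : ∀ x, 1 + (j-1)*(k/2) + 1 ≤ x → x ≤ 1 + j*(k/2) →
      (((1 + (j-1)*(k/2) + 1) ∈ S) ↔ (x ∈ S)) :=
    fun x hx1 hx2 => prop_mem S _ x hx1
      (fun i hi1 hi2 => honly i (by omega) (by omega) (by omega) (by omega))
  have hhigh : ∀ x, 1 + j*(k/2) + 1 ≤ x → x ≤ nn k →
      (((1 + j*(k/2) + 1) ∈ S) ↔ (x ∈ S)) :=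
    fun x hx1 hx2 => prop_mem S _ x hx1
      (fun i hi1 hi2 => honly i (by omega) (by omega) (by omega) (by omega))
  by_cases h1 : (1 + (j-1)*(k/2)) ∈ S
  · right
    have hmidno : (1 + (j-1)*(k/2) + 1) ∉ S := by
      by_contra hc
      exact hXa (iff_of_true h1 hc)
    have hx1no : (1 + j*(k/2)) ∉ S := by
      intro hc
      exact hmidno ((hmid _ (by omega) (by omega)).2 hc)
    have hx1S : (1 + j*(k/2) + 1) ∈ S := by
      by_contra hc
      exact hXb (iff_of_false hx1no hc)
    apply Finset.ext
    intro x
    rw [Finset.mem_sdiff, Qset, Finset.mem_Icc, Finset.mem_Icc]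
    constructor
    · intro hx
      have hx' := Finset.mem_Icc.1 (hsub hx)
      refine ⟨hx', ?_⟩
      rintro ⟨hq1, hq2⟩
      exact hmidno ((hmid x (by omega) hq2).2 hx)
    · rintro ⟨⟨hx1, hx2⟩, hnot⟩
      rcases Nat.lt_or_ge x (2 + (j-1)*(k/2)) with hlt | hge
      · exact (hlow x hx1 (by omega)).2 h1
      · have hge2 : 1 + j*(k/2) + 1 ≤ x := by omega
        exact (hhigh x hge2 hx2).1 hx1S
  · left
    have hmidS : (1 + (j-1)*(k/2) + 1) ∈ S := by
      by_contra hc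
      exact hXa (iff_of_false h1 hc)
    have hx1S : (1 + j*(k/2)) ∈ S := (hmid _ (by omega) (by omega)).1 hmidS
    have hx1no : (1 + j*(k/2) + 1) ∉ S := by
      by_contra hc
      exact hXb (iff_of_true hx1S hc)
    apply Finset.ext
    intro x
    rw [Qset, Finset.mem_Icc]
    constructor
    · intro hx
      have hx' := Finset.mem_Icc.1 (hsub hx)
      constructor
      · by_contra hc
        have hxle : x ≤ 1 + (j-1)*(k/2) := by omega
        exact h1 ((hlow x hx'.1 hxle).1 hx)
      · by_contra hc
        have hxge : 1 + j*(k/2) + 1 ≤ x := by omega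
        exact hx1no ((hhigh x hxge hx'.2).2 hx)
    · rintro ⟨hq1, hq2⟩
      exact (hmid x (by omega) hq2).1 hmidS

private lemma cut_ge (k : ℕ) (S : Finset ℕ) (T J : Finset ℕ)
    (hT : T ⊆ Finset.Icc 1 (nn k - 1))
    (hTX : ∀ i ∈ T, ¬((i ∈ S) ↔ (i + 1 ∈ S)))
    (hJ : J ⊆ Finset.Icc 1 (k - 1))
    (hJX : ∀ j ∈ J, ¬(((1 + (j - 1) * (k / 2)) ∈ S) ↔ ((2 + j * (k / 2)) ∈ S))) :
    (∑ i ∈ T, pathCap k i) + J.card ≤ cutCap k S := by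
  unfold cutCap
  have h1 : (∑ i ∈ T, pathCap k i) ≤ ∑ i ∈ Finset.Icc 1 (nn k - 1),
      (if (i ∈ S) ↔ ((i + 1) ∈ S) then 0 else pathCap k i) := by
    calc (∑ i ∈ T, pathCap k i)
        = ∑ i ∈ T, (if (i ∈ S) ↔ ((i + 1) ∈ S) then 0 else pathCap k i) :=
          Finset.sum_congr rfl (fun i hi => (if_neg (hTX i hi)).symm)
      _ ≤ _ := Finset.sum_le_sum_of_subset hT
  have h2 : J.card ≤ ∑ j ∈ Finset.Icc 1 (k - 1),
      (if ((1 + (j - 1) * (k / 2)) ∈ S) ↔ ((2 + j * (k / 2)) ∈ S) then 0 else 1) := by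
    calc J.card = ∑ _j ∈ J, 1 := by rw [Finset.card_eq_sum_ones]
      _ = ∑ j ∈ J, (if ((1 + (j - 1) * (k / 2)) ∈ S) ↔ ((2 + j * (k / 2)) ∈ S)
            then 0 else 1) :=
          Finset.sum_congr rfl (fun j hj => (if_neg (hJX j hj)).symm)
      _ ≤ _ := Finset.sum_le_sum_of_subset hJ
  exact Nat.add_le_add h1 h2



set_option maxHeartbeats 2000000 in
/-- every nonempty proper `S ⊆ {1, …, n}` which is neither a nested set
nor a Q-set nor the complement of one of these has cut capacity at least `5`. -/
theorem statement2 (k : ℕ) (hk : 4 ≤ k) (hke : Even k) (S : Finset ℕ)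
    (hsub : S ⊆ Finset.Icc 1 (nn k)) (hne : S.Nonempty)
    (hproper : S ≠ Finset.Icc 1 (nn k))
    (hN : ∀ i ∈ Finset.Icc 1 (nn k - 1),
      S ≠ Nset i ∧ S ≠ Finset.Icc 1 (nn k) \ Nset i)
    (hQ : ∀ j ∈ Finset.Icc 1 (k - 1),
      S ≠ Qset k j ∧ S ≠ Finset.Icc 1 (nn k) \ Qset k j) :
    5 ≤ cutCap k S := by
  classical
  have hH : 2 ≤ k / 2 := by omega
  have hnn := nn_eq k hke
  have hn8 : 8 ≤ nn k := by
    have h12 : 3 * (k/2) ≤ (k - 1) * (k/2) := Nat.mul_le_mul_right _ (by omega)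
    omega
  set B := (Finset.Icc 1 (nn k - 1)).filter (fun i => ¬((i ∈ S) ↔ (i + 1 ∈ S))) with hBdef
  have memB : ∀ i, i ∈ B ↔ (1 ≤ i ∧ i ≤ nn k - 1 ∧ ¬((i ∈ S) ↔ (i + 1 ∈ S))) := by
    intro i
    rw [hBdef, Finset.mem_filter, Finset.mem_Icc, and_assoc]
  have hBne : B.Nonempty := by
    rw [Finset.nonempty_iff_ne_empty]
    intro hemp
    have hnoX : ∀ i, 1 ≤ i → i ≤ nn k - 1 → ((i ∈ S) ↔ (i + 1 ∈ S)) := by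
      intro i h1 h2
      by_contra hX
      have hin : i ∈ B := (memB i).2 ⟨h1, h2, hX⟩
      rw [hemp] at hin
      exact absurd hin (Finset.notMem_empty i)
    have hall : ∀ x, 1 ≤ x → x ≤ nn k → ((1 ∈ S) ↔ (x ∈ S)) := fun x h1 h2 =>
      prop_mem S 1 x h1 (fun i hi1 hi2 => hnoX i hi1 (by omega))
    by_cases h1S : (1:ℕ) ∈ S
    · apply hproper
      apply Finset.ext; intro x
      constructor
      · exact fun hx => hsub hx
      · intro hx
        obtain ⟨hx1, hx2⟩ := Finset.mem_Icc.1 hx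
        exact (hall x hx1 hx2).1 h1S
    · obtain ⟨x, hx⟩ := hne
      obtain ⟨hx1, hx2⟩ := Finset.mem_Icc.1 (hsub hx)
      exact h1S ((hall x hx1 hx2).2 hx)
  set a := B.min' hBne with hadef
  set b := B.max' hBne with hbdef
  have haB : a ∈ B := B.min'_mem hBne
  have hbB : b ∈ B := B.max'_mem hBne
  have hamin : ∀ i ∈ B, a ≤ i := fun i hi => B.min'_le i hi
  have hbmax : ∀ i ∈ B, i ≤ b := fun i hi => B.le_max' i hi
  obtain ⟨ha1, ha2, hXa⟩ := (memB a).1 haB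
  obtain ⟨hb1, hb2, hXb⟩ := (memB b).1 hbB
  have hab : a ≠ b := by
    intro hE
    have honly : ∀ i, 1 ≤ i → i ≤ nn k - 1 → i ≠ a → ((i ∈ S) ↔ (i + 1 ∈ S)) := by
      intro i h1 h2 hne'
      by_contra hX
      have hiB : i ∈ B := (memB i).2 ⟨h1, h2, hX⟩
      have h3 := hamin i hiB
      have h4 := hbmax i hiB
      omega
    rcases single_is_N k hk S hsub a ha1 ha2 hXa honly with h | h
    · exact (hN a (Finset.mem_Icc.2 ⟨ha1, ha2⟩)).1 h
    · exact (hN a (Finset.mem_Icc.2 ⟨ha1, ha2⟩)).2 h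
  have haltb : a < b := lt_of_le_of_ne (hamin b hbB) hab
  have mkwin : ∀ j c, 1 + (j-1)*(k/2) ≤ c → c ≤ 1 + j*(k/2) → c ∈ B →
      (∀ i, 1 + (j-1)*(k/2) ≤ i → i ≤ 1 + j*(k/2) → i ≠ c → i ∉ B) →
      j ≤ k - 1 →
      ¬(((1 + (j - 1) * (k / 2)) ∈ S) ↔ ((2 + j * (k / 2)) ∈ S)) := by
    intro j c hc1 hc2 hcB hiso hjk
    have hXc := ((memB c).1 hcB).2.2
    refine window_odd k S j c hc1 hc2 hXc ?_
    intro i hi1 hi2 hne'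
    have hjm : j * (k/2) ≤ (k-1) * (k/2) := Nat.mul_le_mul_right _ hjk
    by_contra hX
    exact (hiso i hi1 hi2 hne') ((memB i).2 ⟨by omega, by omega, hX⟩)
  have hTab : ({a, b} : Finset ℕ) ⊆ Finset.Icc 1 (nn k - 1) := by
    intro x hx
    simp only [Finset.mem_insert, Finset.mem_singleton] at hx
    rw [Finset.mem_Icc]
    rcases hx with rfl | rfl <;> omega
  have hTXab : ∀ i ∈ ({a, b} : Finset ℕ), ¬((i ∈ S) ↔ (i + 1 ∈ S)) := by
    intro i hi
    simp only [Finset.mem_insert, Finset.mem_singleton] at hi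
    rcases hi with rfl | rfl
    · exact hXa
    · exact hXb
  rcases trich k hk hke a ha1 ha2 with hA | hA | ⟨p, hp1, hp2, hap⟩ | ⟨r, hr1, hr2, har1, har2⟩
  -- ═══════════ CASE 3 : a = 1 ═══════════
  · rcases trich k hk hke b hb1 hb2 with hB | hB | ⟨s, hs1, hs2, hbs⟩ | ⟨t, ht1, ht2, hbt1, hbt2⟩
    · omega
    -- 3b : b = nn k - 1
    · by_cases hthird : ∃ c ∈ B, c ≠ a ∧ c ≠ b
      · obtain ⟨c, hcB, hca, hcb⟩ := hthird
        obtain ⟨hc1, hc2, hXc⟩ := (memB c).1 hcB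
        have hT : ({c, a, b} : Finset ℕ) ⊆ Finset.Icc 1 (nn k - 1) := by
          intro x hx
          simp only [Finset.mem_insert, Finset.mem_singleton] at hx
          rw [Finset.mem_Icc]
          rcases hx with rfl | rfl | rfl <;> omega
        have hTX : ∀ i ∈ ({c, a, b} : Finset ℕ), ¬((i ∈ S) ↔ (i + 1 ∈ S)) := by
          intro i hi
          simp only [Finset.mem_insert, Finset.mem_singleton] at hi
          rcases hi with rfl | rfl | rfl
          · exact hXc
          · exact hXa
          · exact hXb
        have hmain := cut_ge k S {c, a, b} ∅ hT hTX (Finset.empty_subset _) (by simp)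
        rw [Finset.sum_insert (by simp only [Finset.mem_insert, Finset.mem_singleton]; tauto),
            Finset.sum_pair hab, hA, hB, pathCap_one, pathCap_last] at hmain
        have hpc := pathCap_pos k c
        simp only [Finset.card_empty] at hmain
        omega
      · have hno3 : ∀ i ∈ B, i = a ∨ i = b := by
          intro i hiB
          by_contra hc
          push_neg at hc
          exact hthird ⟨i, hiB, hc.1, hc.2⟩
        have hm1 : (2:ℕ) * (k/2) ≤ (k-1) * (k/2) := Nat.mul_le_mul_right _ (by omega)
        have hm2 : (1:ℕ) * (k/2) + (k/2) = 2 * (k/2) := by ring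
        have hw1 : ¬(((1 + (1 - 1) * (k / 2)) ∈ S) ↔ ((2 + 1 * (k / 2)) ∈ S)) := by
          apply mkwin 1 a
          · omega
          · omega
          · exact haB
          · intro i hi1 hi2 hne' hiB
            rcases hno3 i hiB with rfl | rfl
            · exact hne' rfl
            · omega
          · omega
        have hmek : k - 1 - 1 = k - 2 := by omega
        have hm3 : (k-1-1) * (k/2) + (k/2) = (k-1) * (k/2) := mul_pred_step _ _ (by omega)
        have hm4 : (k-1-1) * (k/2) = (k-2) * (k/2) := by rw [hmek]
        have hm5 : (2:ℕ) * (k/2) ≤ (k-2) * (k/2) := Nat.mul_le_mul_right _ (by omega)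
        have hwlast : ¬(((1 + (k - 1 - 1) * (k / 2)) ∈ S) ↔ ((2 + (k - 1) * (k / 2)) ∈ S)) := by
          apply mkwin (k-1) b
          · omega
          · omega
          · exact hbB
          · intro i hi1 hi2 hne' hiB
            rcases hno3 i hiB with rfl | rfl
            · omega
            · exact hne' rfl
          · omega
        have hJ : ({1, k-1} : Finset ℕ) ⊆ Finset.Icc 1 (k - 1) := by
          intro x hx
          simp only [Finset.mem_insert, Finset.mem_singleton] at hx
          rw [Finset.mem_Icc]
          rcases hx with rfl | rfl <;> omega
        have hJX : ∀ j ∈ ({1, k-1} : Finset ℕ),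
            ¬(((1 + (j - 1) * (k / 2)) ∈ S) ↔ ((2 + j * (k / 2)) ∈ S)) := by
          intro j hj
          simp only [Finset.mem_insert, Finset.mem_singleton] at hj
          rcases hj with rfl | rfl
          · exact hw1
          · exact hwlast
        have hmain := cut_ge k S {a, b} {1, k-1} hTab hTXab hJ hJX
        rw [Finset.sum_pair hab, hA, hB, pathCap_one, pathCap_last,
            Finset.card_pair (by omega)] at hmain
        omega
    -- 3c : b = 1 + s*(k/2)
    · have hstep : (s+1) * (k/2) = s * (k/2) + (k/2) := by ring
      have hss : (s + 1 - 1) * (k/2) = s * (k/2) := by rw [Nat.add_sub_cancel]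
      have hmono : s * (k/2) ≤ (k-1) * (k/2) := Nat.mul_le_mul_right _ (by omega)
      have hwr : ¬(((1 + (s + 1 - 1) * (k / 2)) ∈ S) ↔ ((2 + (s + 1) * (k / 2)) ∈ S)) := by
        apply mkwin (s+1) b
        · omega
        · omega
        · exact hbB
        · intro i hi1 hi2 hne' hiB
          have := hbmax i hiB
          omega
        · omega
      by_cases hthird : ∃ c ∈ B, c ≠ a ∧ c ≠ b
      · obtain ⟨c, hcB, hca, hcb⟩ := hthird
        obtain ⟨hc1, hc2, hXc⟩ := (memB c).1 hcB
        have hT : ({c, a, b} : Finset ℕ) ⊆ Finset.Icc 1 (nn k - 1) := by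
          intro x hx
          simp only [Finset.mem_insert, Finset.mem_singleton] at hx
          rw [Finset.mem_Icc]
          rcases hx with rfl | rfl | rfl <;> omega
        have hTX : ∀ i ∈ ({c, a, b} : Finset ℕ), ¬((i ∈ S) ↔ (i + 1 ∈ S)) := by
          intro i hi
          simp only [Finset.mem_insert, Finset.mem_singleton] at hi
          rcases hi with rfl | rfl | rfl
          · exact hXc
          · exact hXa
          · exact hXb
        have hJX : ∀ j ∈ ({s+1} : Finset ℕ),
            ¬(((1 + (j - 1) * (k / 2)) ∈ S) ↔ ((2 + j * (k / 2)) ∈ S)) := by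
          intro j hj
          simp only [Finset.mem_singleton] at hj
          subst hj
          exact hwr
        have hmain := cut_ge k S {c, a, b} {s+1} hT hTX
          (by rw [Finset.singleton_subset_iff, Finset.mem_Icc]; omega) hJX
        rw [Finset.sum_insert (by simp only [Finset.mem_insert, Finset.mem_singleton]; tauto),
            Finset.sum_pair hab, hA, pathCap_one, Finset.card_singleton] at hmain
        have hpc := pathCap_pos k c
        have hpb := pathCap_pos k b
        omega
      · have hno3 : ∀ i ∈ B, i = a ∨ i = b := by
          intro i hiB
          by_contra hc
          push_neg at hc
          exact hthird ⟨i, hiB, hc.1, hc.2⟩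
        by_cases hs1' : s = 1
        · exfalso
          subst hs1'
          have e1 : 1 + (1 - 1) * (k / 2) = a := by omega
          have e2 : 1 + 1 * (k / 2) = b := hbs.symm
          have hXa' : ¬(((1 + (1 - 1) * (k / 2)) ∈ S) ↔ ((1 + (1 - 1) * (k / 2) + 1) ∈ S)) := by
            rw [e1]; exact hXa
          have hXb' : ¬(((1 + 1 * (k / 2)) ∈ S) ↔ ((1 + 1 * (k / 2) + 1) ∈ S)) := by
            rw [e2]; exact hXb
          have honly : ∀ i, 1 ≤ i → i ≤ nn k - 1 → i ≠ 1 + (1 - 1) * (k / 2) →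
              i ≠ 1 + 1 * (k / 2) → ((i ∈ S) ↔ (i + 1 ∈ S)) := by
            intro i h1 h2 hne1 hne2
            by_contra hX
            rcases hno3 i ((memB i).2 ⟨h1, h2, hX⟩) with rfl | rfl
            · exact hne1 e1.symm
            · exact hne2 e2.symm
          rcases pair_is_Q k hk hke S hsub 1 le_rfl (by omega) hXa' hXb' honly with h | h
          · exact (hQ 1 (Finset.mem_Icc.2 ⟨le_rfl, by omega⟩)).1 h
          · exact (hQ 1 (Finset.mem_Icc.2 ⟨le_rfl, by omega⟩)).2 h
        · -- s ≥ 2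
          have hm1 : (2:ℕ) * (k/2) ≤ s * (k/2) := Nat.mul_le_mul_right _ (by omega)
          have hm2 : (1:ℕ) * (k/2) + (k/2) = 2 * (k/2) := by ring
          have hw1 : ¬(((1 + (1 - 1) * (k / 2)) ∈ S) ↔ ((2 + 1 * (k / 2)) ∈ S)) := by
            apply mkwin 1 a
            · omega
            · omega
            · exact haB
            · intro i hi1 hi2 hne' hiB
              rcases hno3 i hiB with rfl | rfl
              · exact hne' rfl
              · omega
            · omega
          have hm3 : (s-1) * (k/2) + (k/2) = s * (k/2) := mul_pred_step _ _ (by omega)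
          have hm4 : (1:ℕ) * (k/2) ≤ (s-1) * (k/2) := Nat.mul_le_mul_right _ (by omega)
          have hws : ¬(((1 + (s - 1) * (k / 2)) ∈ S) ↔ ((2 + s * (k / 2)) ∈ S)) := by
            apply mkwin s b
            · omega
            · omega
            · exact hbB
            · intro i hi1 hi2 hne' hiB
              rcases hno3 i hiB with rfl | rfl
              · omega
              · exact hne' rfl
            · omega
          have hJ : ({1, s, s+1} : Finset ℕ) ⊆ Finset.Icc 1 (k - 1) := by
            intro x hx
            simp only [Finset.mem_insert, Finset.mem_singleton] at hx
            rw [Finset.mem_Icc]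
            rcases hx with rfl | rfl | rfl <;> omega
          have hJX : ∀ j ∈ ({1, s, s+1} : Finset ℕ),
              ¬(((1 + (j - 1) * (k / 2)) ∈ S) ↔ ((2 + j * (k / 2)) ∈ S)) := by
            intro j hj
            simp only [Finset.mem_insert, Finset.mem_singleton] at hj
            rcases hj with rfl | rfl | rfl
            · exact hw1
            · exact hws
            · exact hwr
          have hcard : ({1, s, s+1} : Finset ℕ).card = 3 := by
            rw [Finset.card_insert_of_notMem (by
              simp only [Finset.mem_insert, Finset.mem_singleton]; omega),
              Finset.card_pair (by omega)]
          have hmain := cut_ge k S {a, b} {1, s, s+1} hTab hTXab hJ hJX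
          rw [Finset.sum_pair hab, hA, pathCap_one, hcard] at hmain
          have hpb := pathCap_pos k b
          omega
    -- 3a : b interior
    · have hcapb : pathCap k b = 3 := pathCap_interior k hk hke b t ht1 ht2 hbt1 hbt2
      have hmain := cut_ge k S {a, b} ∅ hTab hTXab (Finset.empty_subset _) (by simp)
      rw [Finset.sum_pair hab, hA, pathCap_one, hcapb] at hmain
      simp only [Finset.card_empty] at hmain
      omega
  -- ═══════════ a = nn k - 1 : impossible ═══════════
  · omega
  -- ═══════════ CASE 2 : a = 1 + p*(k/2) ═══════════
  · have hstepp : (p-1) * (k/2) + (k/2) = p * (k/2) := mul_pred_step _ _ hp1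
    have hmonop : p * (k/2) ≤ (k-1) * (k/2) := Nat.mul_le_mul_right _ (by omega)
    have hwp : ¬(((1 + (p - 1) * (k / 2)) ∈ S) ↔ ((2 + p * (k / 2)) ∈ S)) := by
      apply mkwin p a
      · omega
      · omega
      · exact haB
      · intro i hi1 hi2 hne' hiB
        have := hamin i hiB
        omega
      · omega
    rcases trich k hk hke b hb1 hb2 with hB | hB | ⟨s, hs1, hs2, hbs⟩ | ⟨t, ht1, ht2, hbt1, hbt2⟩
    · omega
    -- 2b : b = nn k - 1
    · by_cases hthird : ∃ c ∈ B, c ≠ a ∧ c ≠ b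
      · obtain ⟨c, hcB, hca, hcb⟩ := hthird
        obtain ⟨hc1, hc2, hXc⟩ := (memB c).1 hcB
        have hT : ({c, a, b} : Finset ℕ) ⊆ Finset.Icc 1 (nn k - 1) := by
          intro x hx
          simp only [Finset.mem_insert, Finset.mem_singleton] at hx
          rw [Finset.mem_Icc]
          rcases hx with rfl | rfl | rfl <;> omega
        have hTX : ∀ i ∈ ({c, a, b} : Finset ℕ), ¬((i ∈ S) ↔ (i + 1 ∈ S)) := by
          intro i hi
          simp only [Finset.mem_insert, Finset.mem_singleton] at hi
          rcases hi with rfl | rfl | rfl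
          · exact hXc
          · exact hXa
          · exact hXb
        have hJX : ∀ j ∈ ({p} : Finset ℕ),
            ¬(((1 + (j - 1) * (k / 2)) ∈ S) ↔ ((2 + j * (k / 2)) ∈ S)) := by
          intro j hj
          simp only [Finset.mem_singleton] at hj
          subst hj
          exact hwp
        have hmain := cut_ge k S {c, a, b} {p} hT hTX
          (by rw [Finset.singleton_subset_iff, Finset.mem_Icc]; omega) hJX
        rw [Finset.sum_insert (by simp only [Finset.mem_insert, Finset.mem_singleton]; tauto),
            Finset.sum_pair hab, hB, pathCap_last, Finset.card_singleton] at hmain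
        have hpc := pathCap_pos k c
        have hpa := pathCap_pos k a
        omega
      · have hno3 : ∀ i ∈ B, i = a ∨ i = b := by
          intro i hiB
          by_contra hc
          push_neg at hc
          exact hthird ⟨i, hiB, hc.1, hc.2⟩
        by_cases hpk : p = k - 2
        · exfalso
          subst hpk
          have hmek : k - 1 - 1 = k - 2 := by omega
          have e1 : 1 + (k - 1 - 1) * (k / 2) = a := by rw [hmek, ← hap]
          have e2 : 1 + (k - 1) * (k / 2) = b := by omega
          have hXa' : ¬(((1 + (k - 1 - 1) * (k / 2)) ∈ S) ↔
              ((1 + (k - 1 - 1) * (k / 2) + 1) ∈ S)) := by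
            rw [e1]; exact hXa
          have hXb' : ¬(((1 + (k - 1) * (k / 2)) ∈ S) ↔
              ((1 + (k - 1) * (k / 2) + 1) ∈ S)) := by
            rw [e2]; exact hXb
          have honly : ∀ i, 1 ≤ i → i ≤ nn k - 1 → i ≠ 1 + (k - 1 - 1) * (k / 2) →
              i ≠ 1 + (k - 1) * (k / 2) → ((i ∈ S) ↔ (i + 1 ∈ S)) := by
            intro i h1 h2 hne1 hne2
            by_contra hX
            rcases hno3 i ((memB i).2 ⟨h1, h2, hX⟩) with rfl | rfl
            · exact hne1 e1.symm
            · exact hne2 e2.symm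
          rcases pair_is_Q k hk hke S hsub (k-1) (by omega) le_rfl hXa' hXb' honly with h | h
          · exact (hQ (k-1) (Finset.mem_Icc.2 ⟨by omega, le_rfl⟩)).1 h
          · exact (hQ (k-1) (Finset.mem_Icc.2 ⟨by omega, le_rfl⟩)).2 h
        · -- p ≤ k - 3
          have hsucc : (p + 1 - 1) * (k/2) = p * (k/2) := by rw [Nat.add_sub_cancel]
          have hstep2 : (p+1) * (k/2) = p * (k/2) + (k/2) := by ring
          have hm1 : (p+1) * (k/2) ≤ (k-2) * (k/2) := Nat.mul_le_mul_right _ (by omega)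
          have hmek : k - 1 - 1 = k - 2 := by omega
          have hm2 : (k-1-1) * (k/2) + (k/2) = (k-1) * (k/2) := mul_pred_step _ _ (by omega)
          have hm3 : (k-1-1) * (k/2) = (k-2) * (k/2) := by rw [hmek]
          have hm4 : p * (k/2) ≤ (k-3) * (k/2) := Nat.mul_le_mul_right _ (by omega)
          have hm5 : (k-3) * (k/2) + (k/2) = (k-2) * (k/2) := by
            have e : k - 2 - 1 = k - 3 := by omega
            have h' := mul_pred_step (k/2) (k-2) (by omega)
            rw [e] at h'
            exact h'
          have hwp1 : ¬(((1 + (p + 1 - 1) * (k / 2)) ∈ S) ↔ ((2 + (p + 1) * (k / 2)) ∈ S)) := by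
            apply mkwin (p+1) a
            · omega
            · omega
            · exact haB
            · intro i hi1 hi2 hne' hiB
              rcases hno3 i hiB with rfl | rfl
              · exact hne' rfl
              · omega
            · omega
          have hwlast : ¬(((1 + (k - 1 - 1) * (k / 2)) ∈ S) ↔ ((2 + (k - 1) * (k / 2)) ∈ S)) := by
            apply mkwin (k-1) b
            · omega
            · omega
            · exact hbB
            · intro i hi1 hi2 hne' hiB
              rcases hno3 i hiB with rfl | rfl
              · omega
              · exact hne' rfl
            · omega
          have hJ : ({p, p+1, k-1} : Finset ℕ) ⊆ Finset.Icc 1 (k - 1) := by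
            intro x hx
            simp only [Finset.mem_insert, Finset.mem_singleton] at hx
            rw [Finset.mem_Icc]
            rcases hx with rfl | rfl | rfl <;> omega
          have hJX : ∀ j ∈ ({p, p+1, k-1} : Finset ℕ),
              ¬(((1 + (j - 1) * (k / 2)) ∈ S) ↔ ((2 + j * (k / 2)) ∈ S)) := by
            intro j hj
            simp only [Finset.mem_insert, Finset.mem_singleton] at hj
            rcases hj with rfl | rfl | rfl
            · exact hwp
            · exact hwp1
            · exact hwlast
          have hcard : ({p, p+1, k-1} : Finset ℕ).card = 3 := by
            rw [Finset.card_insert_of_notMem (by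
              simp only [Finset.mem_insert, Finset.mem_singleton]; omega),
              Finset.card_pair (by omega)]
          have hmain := cut_ge k S {a, b} {p, p+1, k-1} hTab hTXab hJ hJX
          rw [Finset.sum_pair hab, hB, pathCap_last, hcard] at hmain
          have hpa := pathCap_pos k a
          omega
    -- 2c : b = 1 + s*(k/2)
    · have hps : p < s := by
        by_contra hc
        have : s * (k/2) ≤ p * (k/2) := Nat.mul_le_mul_right _ (by omega)
        omega
      have hstep : (s+1) * (k/2) = s * (k/2) + (k/2) := by ring
      have hss : (s + 1 - 1) * (k/2) = s * (k/2) := by rw [Nat.add_sub_cancel]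
      have hmonos : s * (k/2) ≤ (k-1) * (k/2) := Nat.mul_le_mul_right _ (by omega)
      have hwr : ¬(((1 + (s + 1 - 1) * (k / 2)) ∈ S) ↔ ((2 + (s + 1) * (k / 2)) ∈ S)) := by
        apply mkwin (s+1) b
        · omega
        · omega
        · exact hbB
        · intro i hi1 hi2 hne' hiB
          have := hbmax i hiB
          omega
        · omega
      by_cases hthird : ∃ c ∈ B, c ≠ a ∧ c ≠ b
      · obtain ⟨c, hcB, hca, hcb⟩ := hthird
        obtain ⟨hc1, hc2, hXc⟩ := (memB c).1 hcB
        have hT : ({c, a, b} : Finset ℕ) ⊆ Finset.Icc 1 (nn k - 1) := by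
          intro x hx
          simp only [Finset.mem_insert, Finset.mem_singleton] at hx
          rw [Finset.mem_Icc]
          rcases hx with rfl | rfl | rfl <;> omega
        have hTX : ∀ i ∈ ({c, a, b} : Finset ℕ), ¬((i ∈ S) ↔ (i + 1 ∈ S)) := by
          intro i hi
          simp only [Finset.mem_insert, Finset.mem_singleton] at hi
          rcases hi with rfl | rfl | rfl
          · exact hXc
          · exact hXa
          · exact hXb
        have hJ : ({p, s+1} : Finset ℕ) ⊆ Finset.Icc 1 (k - 1) := by
          intro x hx
          simp only [Finset.mem_insert, Finset.mem_singleton] at hx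
          rw [Finset.mem_Icc]
          rcases hx with rfl | rfl <;> omega
        have hJX : ∀ j ∈ ({p, s+1} : Finset ℕ),
            ¬(((1 + (j - 1) * (k / 2)) ∈ S) ↔ ((2 + j * (k / 2)) ∈ S)) := by
          intro j hj
          simp only [Finset.mem_insert, Finset.mem_singleton] at hj
          rcases hj with rfl | rfl
          · exact hwp
          · exact hwr
        have hmain := cut_ge k S {c, a, b} {p, s+1} hT hTX hJ hJX
        rw [Finset.sum_insert (by simp only [Finset.mem_insert, Finset.mem_singleton]; tauto),
            Finset.sum_pair hab, Finset.card_pair (by omega)] at hmain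
        have hpc := pathCap_pos k c
        have hpa := pathCap_pos k a
        have hpb := pathCap_pos k b
        omega
      · have hno3 : ∀ i ∈ B, i = a ∨ i = b := by
          intro i hiB
          by_contra hc
          push_neg at hc
          exact hthird ⟨i, hiB, hc.1, hc.2⟩
        by_cases hsp : s = p + 1
        · exfalso
          subst hsp
          have e1 : 1 + (p + 1 - 1) * (k / 2) = a := by rw [Nat.add_sub_cancel, ← hap]
          have e2 : 1 + (p + 1) * (k / 2) = b := hbs.symm
          have hXa' : ¬(((1 + (p + 1 - 1) * (k / 2)) ∈ S) ↔
              ((1 + (p + 1 - 1) * (k / 2) + 1) ∈ S)) := by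
            rw [e1]; exact hXa
          have hXb' : ¬(((1 + (p + 1) * (k / 2)) ∈ S) ↔
              ((1 + (p + 1) * (k / 2) + 1) ∈ S)) := by
            rw [e2]; exact hXb
          have honly : ∀ i, 1 ≤ i → i ≤ nn k - 1 → i ≠ 1 + (p + 1 - 1) * (k / 2) →
              i ≠ 1 + (p + 1) * (k / 2) → ((i ∈ S) ↔ (i + 1 ∈ S)) := by
            intro i h1 h2 hne1 hne2
            by_contra hX
            rcases hno3 i ((memB i).2 ⟨h1, h2, hX⟩) with rfl | rfl
            · exact hne1 e1.symm
            · exact hne2 e2.symm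
          rcases pair_is_Q k hk hke S hsub (p+1) (by omega) (by omega) hXa' hXb' honly with h | h
          · exact (hQ (p+1) (Finset.mem_Icc.2 ⟨by omega, by omega⟩)).1 h
          · exact (hQ (p+1) (Finset.mem_Icc.2 ⟨by omega, by omega⟩)).2 h
        · -- s ≥ p + 2
          have hsucc : (p + 1 - 1) * (k/2) = p * (k/2) := by rw [Nat.add_sub_cancel]
          have hstep2 : (p+1) * (k/2) = p * (k/2) + (k/2) := by ring
          have hm1 : (p+1) * (k/2) ≤ (s-1) * (k/2) := Nat.mul_le_mul_right _ (by omega)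
          have hm2 : (s-1) * (k/2) + (k/2) = s * (k/2) := mul_pred_step _ _ (by omega)
          have hm3 : p * (k/2) ≤ (s-2) * (k/2) := Nat.mul_le_mul_right _ (by omega)
          have hm4 : (s-2) * (k/2) + (k/2) = (s-1) * (k/2) := by
            have e : s - 1 - 1 = s - 2 := by omega
            have h' := mul_pred_step (k/2) (s-1) (by omega)
            rw [e] at h'
            exact h'
          have hwp1 : ¬(((1 + (p + 1 - 1) * (k / 2)) ∈ S) ↔ ((2 + (p + 1) * (k / 2)) ∈ S)) := by
            apply mkwin (p+1) a
            · omega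
            · omega
            · exact haB
            · intro i hi1 hi2 hne' hiB
              rcases hno3 i hiB with rfl | rfl
              · exact hne' rfl
              · omega
            · omega
          have hws : ¬(((1 + (s - 1) * (k / 2)) ∈ S) ↔ ((2 + s * (k / 2)) ∈ S)) := by
            apply mkwin s b
            · omega
            · omega
            · exact hbB
            · intro i hi1 hi2 hne' hiB
              rcases hno3 i hiB with rfl | rfl
              · omega
              · exact hne' rfl
            · omega
          have hJ : ({p, p+1, s, s+1} : Finset ℕ) ⊆ Finset.Icc 1 (k - 1) := by
            intro x hx
            simp only [Finset.mem_insert, Finset.mem_singleton] at hx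
            rw [Finset.mem_Icc]
            rcases hx with rfl | rfl | rfl | rfl <;> omega
          have hJX : ∀ j ∈ ({p, p+1, s, s+1} : Finset ℕ),
              ¬(((1 + (j - 1) * (k / 2)) ∈ S) ↔ ((2 + j * (k / 2)) ∈ S)) := by
            intro j hj
            simp only [Finset.mem_insert, Finset.mem_singleton] at hj
            rcases hj with rfl | rfl | rfl | rfl
            · exact hwp
            · exact hwp1
            · exact hws
            · exact hwr
          have hcard : ({p, p+1, s, s+1} : Finset ℕ).card = 4 := by
            rw [Finset.card_insert_of_notMem (by
              simp only [Finset.mem_insert, Finset.mem_singleton]; omega),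
              Finset.card_insert_of_notMem (by
              simp only [Finset.mem_insert, Finset.mem_singleton]; omega),
              Finset.card_pair (by omega)]
          have hmain := cut_ge k S {a, b} {p, p+1, s, s+1} hTab hTXab hJ hJX
          rw [Finset.sum_pair hab, hcard] at hmain
          have hpa := pathCap_pos k a
          have hpb := pathCap_pos k b
          omega
    -- 2-interior : b interior
    · have hcapb : pathCap k b = 3 := pathCap_interior k hk hke b t ht1 ht2 hbt1 hbt2
      have hJX : ∀ j ∈ ({p} : Finset ℕ),
          ¬(((1 + (j - 1) * (k / 2)) ∈ S) ↔ ((2 + j * (k / 2)) ∈ S)) := by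
        intro j hj
        simp only [Finset.mem_singleton] at hj
        subst hj
        exact hwp
      have hmain := cut_ge k S {a, b} {p} hTab hTXab
        (by rw [Finset.singleton_subset_iff, Finset.mem_Icc]; omega) hJX
      rw [Finset.sum_pair hab, hcapb, Finset.card_singleton] at hmain
      have hpa := pathCap_pos k a
      omega
  -- ═══════════ CASE 1 : a interior ═══════════
  · have hcapa : pathCap k a = 3 := pathCap_interior k hk hke a r hr1 hr2 har1 har2
    rcases trich k hk hke b hb1 hb2 with hB | hB | ⟨s, hs1, hs2, hbs⟩ | ⟨t, ht1, ht2, hbt1, hbt2⟩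
    · omega
    -- 1 : b = nn k - 1
    · have hmain := cut_ge k S {a, b} ∅ hTab hTXab (Finset.empty_subset _) (by simp)
      rw [Finset.sum_pair hab, hB, pathCap_last, hcapa] at hmain
      simp only [Finset.card_empty] at hmain
      omega
    -- 1b : b = 1 + s*(k/2)
    · have hstep : (s+1) * (k/2) = s * (k/2) + (k/2) := by ring
      have hss : (s + 1 - 1) * (k/2) = s * (k/2) := by rw [Nat.add_sub_cancel]
      have hmono : s * (k/2) ≤ (k-1) * (k/2) := Nat.mul_le_mul_right _ (by omega)
      have hwr : ¬(((1 + (s + 1 - 1) * (k / 2)) ∈ S) ↔ ((2 + (s + 1) * (k / 2)) ∈ S)) := by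
        apply mkwin (s+1) b
        · omega
        · omega
        · exact hbB
        · intro i hi1 hi2 hne' hiB
          have := hbmax i hiB
          omega
        · omega
      have hJX : ∀ j ∈ ({s+1} : Finset ℕ),
          ¬(((1 + (j - 1) * (k / 2)) ∈ S) ↔ ((2 + j * (k / 2)) ∈ S)) := by
        intro j hj
        simp only [Finset.mem_singleton] at hj
        subst hj
        exact hwr
      have hmain := cut_ge k S {a, b} {s+1} hTab hTXab
        (by rw [Finset.singleton_subset_iff, Finset.mem_Icc]; omega) hJX
      rw [Finset.sum_pair hab, hcapa, Finset.card_singleton] at hmain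
      have hpb := pathCap_pos k b
      omega
    -- 1a : b interior
    · have hcapb : pathCap k b = 3 := pathCap_interior k hk hke b t ht1 ht2 hbt1 hbt2
      have hmain := cut_ge k S {a, b} ∅ hTab hTXab (Finset.empty_subset _) (by simp)
      rw [Finset.sum_pair hab, hcapa, hcapb] at hmain
      simp only [Finset.card_empty] at hmain
      omega


end CoverSmallCuts
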